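/- Let β > 0 be a real number and N ≥ 1 an integer with N·β > 1, and set T := N·⌊N·β⌋. Then there exist: a finite set S with |S| = N; the uniform distribution d₁ on S; an action set A = {a₀, a₁}; the true mean-reward function g* ≡ 0 on S × A; deterministic policies π^(1),…,π^(T) : S → A; and estimates ĝ^(1),…,ĝ^(T) : S × A → [0,1], such that: (offline guarantee) for every t ∈ {1,…,T}, ∑_{τ=1}^{t−1} (1/N) ∑_{s ∈ S} ( ĝ^(t)(s, π^(τ)(s)) − g*(s, π^(τ)(s)) )² ≤ β; and (online lower bound) ∑_{t=1}^{T} (1/N) ∑_{s ∈ S} ( ĝ^(t)(s, π^(t)(s)) − g*(s, π^(t)(s)) )² ≥ (1/2)·√(T·β). -/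

import Mathlib

/-- Tightness of offline-to-online conversion for contextual bandits.  For
`β > 0` and `N ≥ 1` with `N·β > 1` and `T = N·⌊N·β⌋`, there exist (taking the context set
`S = Fin N` of size `N`, the uniform context distribution, the two-action set `A = Bool`, and
the zero mean-reward function `g* ≡ 0`) deterministic policies `π^(t) : S → A` and estimates
`ĝ^(t) : S → A → [0,1]` satisfying the offline guarantee with parameter `β` whose online
estimation error is at least `(1/2)·√(T·β)`. -/
theorem contextual_bandit_conversion_tightness
    (β : ℝ) (hβ : 0 < β) (N : ℕ) (hN : 1 ≤ N) (hNβ : 1 < (N : ℝ) * β)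
    (T : ℕ) (hT : T = N * Nat.floor ((N : ℝ) * β)) :
    ∃ (gstar : Fin N → Bool → ℝ) (π : ℕ → Fin N → Bool) (ghat : ℕ → Fin N → Bool → ℝ),
      (∀ s a, gstar s a = 0) ∧
      (∀ t ∈ Finset.Icc 1 T, ∀ s a, ghat t s a ∈ Set.Icc (0 : ℝ) 1) ∧
      (∀ t ∈ Finset.Icc 1 T,
        ∑ τ ∈ Finset.Icc 1 (t - 1),
          (N : ℝ)⁻¹ * ∑ s, (ghat t s (π τ s) - gstar s (π τ s)) ^ 2 ≤ β) ∧
      (1 / 2 * Real.sqrt (T * β) ≤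
        ∑ t ∈ Finset.Icc 1 T,
          (N : ℝ)⁻¹ * ∑ s, (ghat t s (π t s) - gstar s (π t s)) ^ 2) := by
  set M := Nat.floor ((N : ℝ) * β) with hMdef
  have hNpos : 0 < N := hN
  have hNR : (0:ℝ) < N := by exact_mod_cast hNpos
  have hM1 : 1 ≤ M := Nat.le_floor (by push_cast; linarith)
  have hMβ : (M : ℝ) ≤ (N : ℝ) * β := Nat.floor_le (by positivity)
  have hβM : (N : ℝ) * β < (M : ℝ) + 1 := Nat.lt_floor_add_one _
  set st : ℕ → Fin N := fun t => ⟨(t - 1) % N, Nat.mod_lt _ hNpos⟩ with hst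
  refine ⟨fun _ _ => 0, fun t s => decide (s = st t),
    fun t s a => if s = st t ∧ a = true then 1 else 0, fun _ _ => rfl, ?_, ?_, ?_⟩
  · intro t _ s a
    by_cases h : s = st t ∧ a = true <;> simp [h]
  -- key computation of the inner sum
  · simp only []
    have key : ∀ t τ : ℕ,
        (∑ s : Fin N, ((if s = st t ∧ (decide (s = st τ)) = true then (1:ℝ) else 0) - 0) ^ 2)
          = if st t = st τ then 1 else 0 := by
      intro t τ
      have h1 : ∀ s : Fin N,
          ((if s = st t ∧ (decide (s = st τ)) = true then (1:ℝ) else 0) - 0) ^ 2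
            = if s = st t then (if st t = st τ then (1:ℝ) else 0) else 0 := by
        intro s
        by_cases h1 : s = st t
        · subst h1
          by_cases h2 : st t = st τ <;> simp [h2]
        · simp [h1]
      rw [Finset.sum_congr rfl fun s _ => h1 s, Finset.sum_ite_eq' Finset.univ (st t)]
      simp
    intro t ht
    have hsum : ∑ τ ∈ Finset.Icc 1 (t - 1),
        (N : ℝ)⁻¹ * ∑ s : Fin N,
          ((if s = st t ∧ (decide (s = st τ)) = true then (1:ℝ) else 0) - 0) ^ 2
        = (N : ℝ)⁻¹ * ((Finset.Icc 1 (t - 1)).filter (fun τ => st t = st τ)).card := by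
      rw [← Finset.mul_sum]
      congr 1
      rw [Finset.sum_congr rfl fun τ _ => key t τ]
      rw [Finset.sum_boole]
    rw [hsum]
    have hcard : (((Finset.Icc 1 (t - 1)).filter (fun τ => st t = st τ)).card : ℕ) ≤ M := by
      have hle : t ≤ T := (Finset.mem_Icc.mp ht).2
      calc ((Finset.Icc 1 (t - 1)).filter (fun τ => st t = st τ)).card
          ≤ (Finset.range M).card := by
            apply Finset.card_le_card_of_injOn (fun τ => (τ - 1) / N)
            · intro τ hτ
              have hτ' := Finset.mem_filter.mp hτ
              have h1 : 1 ≤ τ ∧ τ ≤ t - 1 := Finset.mem_Icc.mp hτ'.1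
              have hτT : τ - 1 < N * M := by omega
              simp only [Finset.mem_range]
              exact Finset.mem_coe.mpr (Finset.mem_range.mpr (Nat.div_lt_of_lt_mul (by omega)))
            · intro τ₁ h₁ τ₂ h₂ heq
              have h₁' := Finset.mem_filter.mp h₁
              have h₂' := Finset.mem_filter.mp h₂
              have hm₁ : (t - 1) % N = (τ₁ - 1) % N := by
                have h := h₁'.2
                simp only [hst, Fin.mk.injEq] at h
                exact h
              have hm₂ : (t - 1) % N = (τ₂ - 1) % N := by
                have h := h₂'.2
                simp only [hst, Fin.mk.injEq] at h
                exact h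
              have hd₁ := Nat.div_add_mod (τ₁ - 1) N
              have hd₂ := Nat.div_add_mod (τ₂ - 1) N
              have hb₁ := (Finset.mem_Icc.mp h₁'.1).1
              have hb₂ := (Finset.mem_Icc.mp h₂'.1).1
              simp only at heq
              have hkey : τ₁ - 1 = τ₂ - 1 := by
                rw [← hd₁, ← hd₂, heq, ← hm₁, ← hm₂]
              omega
        _ = M := Finset.card_range M
    have : ((((Finset.Icc 1 (t - 1)).filter (fun τ => st t = st τ)).card : ℝ)) ≤ (M : ℝ) := by
      exact_mod_cast hcard
    calc (N : ℝ)⁻¹ * (((Finset.Icc 1 (t - 1)).filter (fun τ => st t = st τ)).card : ℝ)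
        ≤ (N : ℝ)⁻¹ * (M : ℝ) := by
          apply mul_le_mul_of_nonneg_left this (by positivity)
      _ ≤ β := by
          rw [inv_mul_le_iff₀ hNR]
          linarith
  -- online lower bound
  · simp only []
    have hsum : ∀ t : ℕ,
        (∑ s : Fin N, ((if s = st t ∧ (decide (s = st t)) = true then (1:ℝ) else 0) - 0) ^ 2)
          = 1 := by
      intro t
      have h1 : ∀ s : Fin N,
          ((if s = st t ∧ (decide (s = st t)) = true then (1:ℝ) else 0) - 0) ^ 2
            = if s = st t then (1:ℝ) else 0 := by
        intro s
        by_cases h : s = st t <;> simp [h]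
      rw [Finset.sum_congr rfl fun s _ => h1 s, Finset.sum_ite_eq' Finset.univ (st t)]
      simp
    have hRHS : ∑ t ∈ Finset.Icc 1 T,
        (N : ℝ)⁻¹ * ∑ s : Fin N,
          ((if s = st t ∧ (decide (s = st t)) = true then (1:ℝ) else 0) - 0) ^ 2
        = (M : ℝ) := by
      rw [Finset.sum_congr rfl fun t _ => by rw [hsum t]]
      rw [Finset.sum_const, Nat.card_Icc]
      have : T + 1 - 1 = T := by omega
      rw [this, hT]
      rw [nsmul_eq_mul, Nat.cast_mul]
      field_simp
    rw [hRHS]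
    have hM2 : (N : ℝ) * β ≤ 2 * M := by
      have : (1:ℝ) ≤ (M : ℝ) := by exact_mod_cast hM1
      linarith
    have hTβ : (T : ℝ) * β ≤ (2 * M) ^ 2 := by
      rw [hT]
      push_cast
      have hMR : (0:ℝ) ≤ (M : ℝ) := by positivity
      nlinarith
    have hsq : Real.sqrt ((T : ℝ) * β) ≤ 2 * M := by
      have h2M : (0:ℝ) ≤ 2 * M := by positivity
      calc Real.sqrt ((T : ℝ) * β) ≤ Real.sqrt ((2 * M) ^ 2) := Real.sqrt_le_sqrt hTβ
        _ = 2 * M := Real.sqrt_sq h2M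
    linarith
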